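/- (Theorem 2.3, refined with degree bounds) For all nonzero polynomials f, g ∈ ℂ[x,y] there exist nonzero polynomials a, b ∈ ℂ[x,y] such that degreeOf y a ≤ degreeOf y g, degreeOf y b ≤ degreeOf y f, and Φ(a) ∘ Φ(f) = Φ(b) ∘ Φ(g) in the endomorphism algebra of ℂ[X]. -/

import Mathlib

open Polynomial MvPolynomial

/-- Multiplication by X on ℂ[X]. -/
noncomputable def M : Module.End ℂ (Polynomial ℂ) := LinearMap.mulLeft ℂ Polynomial.X

/-- Formal derivative on ℂ[X]. -/
noncomputable def D : Module.End ℂ (Polynomial ℂ) := Polynomial.derivative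

/-- Normal-ordering map: extends x^p·y^q ↦ M^p ∘ D^q by ℂ-linearity. -/
noncomputable def Φ (f : MvPolynomial (Fin 2) ℂ) : Module.End ℂ (Polynomial ℂ) :=
  ∑ d ∈ f.support, f.coeff d • (M ^ d 0 * D ^ d 1)


namespace HLC

noncomputable def L : Polynomial ℂ →ₐ[ℂ] Module.End ℂ (Polynomial ℂ) :=
  Algebra.lmul ℂ (Polynomial ℂ)

lemma L_apply (s p : Polynomial ℂ) : L s p = s * p := rfl

lemma M_eq : M = L Polynomial.X := rfl

lemma D_apply (p : Polynomial ℂ) : D p = Polynomial.derivative p := rfl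

lemma D_pow_apply (k : ℕ) (p : Polynomial ℂ) :
    (D ^ k) p = Polynomial.derivative^[k] p := by
  rw [Module.End.pow_apply]; rfl

noncomputable def T (n : ℕ) : (Fin (n + 1) → Polynomial ℂ) →ₗ[ℂ] Module.End ℂ (Polynomial ℂ) where
  toFun r := ∑ k : Fin (n + 1), L (r k) * D ^ (k : ℕ)
  map_add' r s := by simp [map_add, add_mul, Finset.sum_add_distrib]
  map_smul' c r := by simp [smul_mul_assoc, Finset.smul_sum]

lemma T_apply (n : ℕ) (r : Fin (n + 1) → Polynomial ℂ) (p : Polynomial ℂ) :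
    T n r p = ∑ k : Fin (n + 1), r k * Polynomial.derivative^[(k : ℕ)] p := by
  simp only [T, LinearMap.coe_mk, AddHom.coe_mk, LinearMap.sum_apply, Module.End.mul_apply]
  refine Finset.sum_congr rfl fun k _ => ?_
  rw [D_pow_apply]; rfl

lemma T_eq_zero {n : ℕ} {r : Fin (n + 1) → Polynomial ℂ} (h : T n r = 0) : r = 0 := by
  classical
  by_contra hr
  have hex : ∃ k : Fin (n + 1), r k ≠ 0 := by
    by_contra hc
    push_neg at hc
    exact hr (funext hc)
  set S : Finset (Fin (n + 1)) := Finset.univ.filter (fun k => r k ≠ 0) with hS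
  have hSne : S.Nonempty := by
    obtain ⟨k, hk⟩ := hex
    exact ⟨k, by simp [hS, hk]⟩
  set j := S.min' hSne with hj
  have hjS : j ∈ S := S.min'_mem hSne
  have hjne : r j ≠ 0 := by simpa [hS] using hjS
  have happ : T n r (Polynomial.X ^ (j : ℕ)) = 0 := by rw [h]; rfl
  rw [T_apply] at happ
  have hterm : ∀ k : Fin (n + 1), k ≠ j →
      r k * Polynomial.derivative^[(k : ℕ)] (Polynomial.X ^ (j : ℕ)) = 0 := by
    intro k hk
    rcases lt_or_gt_of_ne hk with hlt | hgt
    · have : k ∉ S := fun hmem => absurd (S.min'_le k hmem) (not_le.mpr hlt)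
      have : r k = 0 := by simpa [hS] using this
      simp [this]
    · rw [Polynomial.iterate_derivative_X_pow_eq_smul]
      have : (j : ℕ) < (k : ℕ) := hgt
      simp [Nat.descFactorial_eq_zero_iff_lt.2 this]
  rw [Finset.sum_eq_single j (fun k _ hk => hterm k hk) (by simp)] at happ
  rw [Polynomial.iterate_derivative_X_pow_eq_smul] at happ
  simp only [Nat.sub_self, pow_zero, Nat.descFactorial_self, smul_eq_mul, mul_one] at happ
  rw [Polynomial.smul_eq_C_mul, mul_one] at happ
  have hCne : (Polynomial.C ((Nat.factorial (j : ℕ) : ℂ))) ≠ 0 :=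
    Polynomial.C_ne_zero.mpr (Nat.cast_ne_zero.mpr (Nat.factorial_ne_zero _))
  rcases mul_eq_zero.mp happ with h1 | h2
  · exact hjne h1
  · exact hCne h2


lemma T_injective (n : ℕ) : Function.Injective (T n) := by
  intro u v huv
  have : T n (u - v) = 0 := by rw [map_sub, huv, sub_self]
  have := T_eq_zero this
  exact sub_eq_zero.mp this

lemma mem_single {n : ℕ} (s : Polynomial ℂ) {k : ℕ} (hk : k ≤ n) :
    L s * D ^ k ∈ LinearMap.range (T n) := by
  classical
  refine ⟨fun i => if (i : ℕ) = k then s else 0, ?_⟩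
  show ∑ i : Fin (n + 1), L (if (i : ℕ) = k then s else 0) * D ^ (i : ℕ) = L s * D ^ k
  rw [Finset.sum_eq_single (⟨k, Nat.lt_succ_of_le hk⟩ : Fin (n + 1))]
  · simp
  · intro i _ hi
    have : (i : ℕ) ≠ k := fun h => hi (Fin.ext h)
    simp [this]
  · simp

lemma range_mono {n m : ℕ} (h : n ≤ m) :
    LinearMap.range (T n) ≤ LinearMap.range (T m) := by
  rintro _ ⟨r, rfl⟩
  have : T n r = ∑ k : Fin (n + 1), L (r k) * D ^ (k : ℕ) := rfl
  rw [this]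
  exact Submodule.sum_mem _ fun k _ => mem_single _ ((Nat.le_of_lt_succ k.2).trans h)

lemma lmul_mem {n : ℕ} (s : Polynomial ℂ) {E : Module.End ℂ (Polynomial ℂ)}
    (hE : E ∈ LinearMap.range (T n)) : L s * E ∈ LinearMap.range (T n) := by
  obtain ⟨r, rfl⟩ := hE
  refine ⟨fun k => s * r k, ?_⟩
  show ∑ k : Fin (n + 1), L (s * r k) * D ^ (k : ℕ) = L s * T n r
  have : T n r = ∑ k : Fin (n + 1), L (r k) * D ^ (k : ℕ) := rfl
  rw [this, Finset.mul_sum]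
  exact Finset.sum_congr rfl fun k _ => by rw [map_mul, mul_assoc]

lemma D_comm (s : Polynomial ℂ) :
    D * L s = L (Polynomial.derivative s) + L s * D := by
  apply LinearMap.ext
  intro p
  simp only [Module.End.mul_apply, LinearMap.add_apply, L_apply, D_apply]
  rw [Polynomial.derivative_mul]

lemma D_mul_mem {n : ℕ} {E : Module.End ℂ (Polynomial ℂ)}
    (hE : E ∈ LinearMap.range (T n)) : D * E ∈ LinearMap.range (T (n + 1)) := by
  obtain ⟨r, rfl⟩ := hE
  have : T n r = ∑ k : Fin (n + 1), L (r k) * D ^ (k : ℕ) := rfl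
  rw [this, Finset.mul_sum]
  refine Submodule.sum_mem _ fun k _ => ?_
  have : D * (L (r k) * D ^ (k : ℕ))
      = L (Polynomial.derivative (r k)) * D ^ (k : ℕ) + L (r k) * D ^ ((k : ℕ) + 1) := by
    rw [← mul_assoc, D_comm, add_mul, mul_assoc, pow_succ']
  rw [this]
  refine Submodule.add_mem _ (mem_single _ ?_) (mem_single _ ?_)
  · exact (Nat.le_of_lt_succ k.2).trans (Nat.le_succ n)
  · exact Nat.succ_le_succ (Nat.le_of_lt_succ k.2)

lemma D_pow_mul_mem {n : ℕ} (j : ℕ) {E : Module.End ℂ (Polynomial ℂ)}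
    (hE : E ∈ LinearMap.range (T n)) : D ^ j * E ∈ LinearMap.range (T (n + j)) := by
  induction j with
  | zero => simpa using hE
  | succ j ih =>
      have : D ^ (j + 1) * E = D * (D ^ j * E) := by rw [pow_succ', mul_assoc]
      rw [this]
      exact D_mul_mem ih

lemma mul_mem {m n : ℕ} {A B : Module.End ℂ (Polynomial ℂ)}
    (hA : A ∈ LinearMap.range (T m)) (hB : B ∈ LinearMap.range (T n)) :
    A * B ∈ LinearMap.range (T (m + n)) := by
  obtain ⟨r, rfl⟩ := hA
  have : T m r = ∑ k : Fin (m + 1), L (r k) * D ^ (k : ℕ) := rfl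
  rw [this, Finset.sum_mul]
  refine Submodule.sum_mem _ fun k _ => ?_
  rw [mul_assoc]
  refine lmul_mem _ ?_
  have h1 : D ^ (k : ℕ) * B ∈ LinearMap.range (T (n + (k : ℕ))) := D_pow_mul_mem _ hB
  exact range_mono (by omega) h1


lemma growth {a : ℕ} {r : Fin (a + 1) → Polynomial ℂ} (hr : r ≠ 0) :
    ∃ ν t0 : ℕ, a ≤ t0 ∧ ∀ p : Polynomial ℂ, p ≠ 0 → t0 ≤ p.natDegree →
      T a r p ≠ 0 ∧ p.natDegree - a + ν ≤ (T a r p).natDegree := by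
  classical
  set K : Finset (Fin (a + 1)) := Finset.univ.filter (fun k => r k ≠ 0) with hK
  have hKne : K.Nonempty := by
    by_contra hc
    rw [Finset.not_nonempty_iff_eq_empty] at hc
    apply hr
    funext k
    show r k = 0
    by_contra hk
    have : k ∈ K := by simp [hK, hk]
    simp [hc] at this
  set ν : ℕ := K.sup (fun k => (r k).natDegree + (a - (k : ℕ))) with hν
  set Kν : Finset (Fin (a + 1)) :=
    K.filter (fun k => (r k).natDegree + (a - (k : ℕ)) = ν) with hKν
  have hKνne : Kν.Nonempty := by
    obtain ⟨k, hk, hke⟩ := Finset.exists_mem_eq_sup K hKne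
      (fun k => (r k).natDegree + (a - (k : ℕ)))
    exact ⟨k, Finset.mem_filter.mpr ⟨hk, hke.symm⟩⟩
  set σ : Polynomial ℂ :=
    ∑ k ∈ Kν, Polynomial.C ((r k).leadingCoeff) * descPochhammer ℂ (k : ℕ) with hσ
  -- σ ≠ 0
  obtain ⟨km, hkm, hkmax⟩ := Finset.exists_max_image Kν (fun k => (k : ℕ)) hKνne
  have hrkm : r km ≠ 0 := by
    have := Finset.mem_filter.mp hkm
    have := Finset.mem_filter.mp this.1
    exact this.2
  have hσcoeff : σ.coeff (km : ℕ) = (r km).leadingCoeff := by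
    rw [hσ, Polynomial.finset_sum_coeff]
    rw [Finset.sum_eq_single km]
    · rw [Polynomial.coeff_C_mul]
      have hdeg : (descPochhammer ℂ (km : ℕ)).natDegree = (km : ℕ) :=
        descPochhammer_natDegree _ _
      have hm : (descPochhammer ℂ (km : ℕ)).Monic := monic_descPochhammer _ _
      have : (descPochhammer ℂ (km : ℕ)).coeff (km : ℕ) = 1 := by
        have := hm.coeff_natDegree
        rwa [hdeg] at this
      rw [this, mul_one]
    · intro k hk hkne
      rw [Polynomial.coeff_C_mul]
      have hlt : (k : ℕ) < (km : ℕ) :=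
        lt_of_le_of_ne (hkmax k hk) (fun h => hkne (Fin.ext h))
      have hdeg : (descPochhammer ℂ (k : ℕ)).natDegree = (k : ℕ) :=
        descPochhammer_natDegree _ _
      rw [Polynomial.coeff_eq_zero_of_natDegree_lt (by rw [hdeg]; exact hlt), mul_zero]
    · intro h
      exact absurd hkm h
  have hσne : σ ≠ 0 := fun h => by
    rw [h, Polynomial.coeff_zero] at hσcoeff
    exact hrkm (Polynomial.leadingCoeff_eq_zero.mp hσcoeff.symm)
  -- finitely many natural roots
  have hfin : {x : ℂ | σ.IsRoot x}.Finite := Polynomial.finite_setOf_isRoot hσne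
  have hfin2 : {t : ℕ | σ.eval (t : ℂ) = 0}.Finite := by
    have : {t : ℕ | σ.eval (t : ℂ) = 0} = (Nat.cast : ℕ → ℂ) ⁻¹' {x : ℂ | σ.IsRoot x} := rfl
    rw [this]
    exact Set.Finite.preimage (Nat.cast_injective.injOn) hfin
  obtain ⟨t1, ht1⟩ := hfin2.bddAbove
  refine ⟨ν, max (t1 + 1) a, le_max_right _ _, ?_⟩
  intro p hp hdeg
  set n := p.natDegree with hn
  have han : a ≤ n := le_trans (le_max_right _ _) hdeg
  have hσeval : σ.eval (n : ℂ) ≠ 0 := by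
    intro h
    have h1 : n ≤ t1 := ht1 h
    have h2 : t1 + 1 ≤ n := le_trans (le_max_left _ _) hdeg
    omega
  have hcoeff : (T a r p).coeff (n - a + ν) = p.leadingCoeff * σ.eval (n : ℂ) := by
    rw [T_apply, Polynomial.finset_sum_coeff]
    rw [← Finset.sum_subset (Finset.subset_univ Kν) ?_]
    · rw [hσ, Polynomial.eval_finset_sum, Finset.mul_sum]
      refine Finset.sum_congr rfl fun k hk => ?_
      have hkK := Finset.mem_filter.mp hk
      have hrk : r k ≠ 0 := (Finset.mem_filter.mp hkK.1).2
      have hkν : (r k).natDegree + (a - (k : ℕ)) = ν := hkK.2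
      have hka : (k : ℕ) ≤ a := Nat.le_of_lt_succ k.2
      have hm : n - a + ν = (r k).natDegree + (n - (k : ℕ)) := by omega
      have hd2 : (Polynomial.derivative^[(k : ℕ)] p).natDegree ≤ n - (k : ℕ) := by
        have := Polynomial.natDegree_iterate_derivative p (k : ℕ)
        omega
      rw [hm, Polynomial.coeff_mul_add_eq_of_natDegree_le le_rfl hd2]
      rw [Polynomial.coeff_iterate_derivative]
      have hnk : n - (k : ℕ) + (k : ℕ) = n := Nat.sub_add_cancel (hka.trans han)
      rw [hnk, Polynomial.eval_mul, Polynomial.eval_C,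
        descPochhammer_eval_eq_descFactorial]
      have : p.coeff n = p.leadingCoeff := rfl
      rw [this]
      have : (r k).coeff ((r k).natDegree) = (r k).leadingCoeff := rfl
      rw [this, nsmul_eq_mul]
      ring
    · intro k _ hk
      by_cases hrk : r k = 0
      · simp [hrk]
      · have hkK : k ∈ K := by simp [hK, hrk]
        have hle : (r k).natDegree + (a - (k : ℕ)) ≤ ν :=
          Finset.le_sup (f := fun k => (r k).natDegree + (a - (k : ℕ))) hkK
        have hne : (r k).natDegree + (a - (k : ℕ)) ≠ ν := by
          intro h
          exact hk (Finset.mem_filter.mpr ⟨hkK, h⟩)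
        have hka : (k : ℕ) ≤ a := Nat.le_of_lt_succ k.2
        refine Polynomial.coeff_eq_zero_of_natDegree_lt ?_
        have hb : (r k * Polynomial.derivative^[(k : ℕ)] p).natDegree
            ≤ (r k).natDegree + (n - (k : ℕ)) := by
          refine Polynomial.natDegree_mul_le.trans ?_
          have := Polynomial.natDegree_iterate_derivative p (k : ℕ)
          omega
        omega
  have hcne : (T a r p).coeff (n - a + ν) ≠ 0 := by
    rw [hcoeff]
    exact mul_ne_zero (Polynomial.leadingCoeff_ne_zero.mpr hp) hσeval
  exact ⟨fun h => hcne (by rw [h]; simp), Polynomial.le_natDegree_of_ne_zero hcne⟩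


lemma domain {a b : ℕ} {r : Fin (a + 1) → Polynomial ℂ} {s : Fin (b + 1) → Polynomial ℂ}
    (hr : r ≠ 0) (hs : s ≠ 0) : T a r * T b s ≠ 0 := by
  obtain ⟨ν1, t1, ht1a, h1⟩ := growth hr
  obtain ⟨ν2, t2, ht2b, h2⟩ := growth hs
  intro hzero
  set t := t1 + b + t2 with ht
  have hX : (Polynomial.X : Polynomial ℂ) ^ t ≠ 0 := pow_ne_zero _ Polynomial.X_ne_zero
  have hXdeg : ((Polynomial.X : Polynomial ℂ) ^ t).natDegree = t := Polynomial.natDegree_X_pow t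
  have hq := h2 (Polynomial.X ^ t) hX (by omega)
  set q := T b s (Polynomial.X ^ t) with hqdef
  obtain ⟨hqne, hqdeg⟩ := hq
  rw [hXdeg] at hqdeg
  have hqdeg' : t1 ≤ q.natDegree := by omega
  have := (h1 q hqne hqdeg').1
  apply this
  have : (T a r * T b s) (Polynomial.X ^ t) = T a r q := rfl
  rw [← this, hzero]
  rfl


lemma Φ_eq (f : MvPolynomial (Fin 2) ℂ) :
    Φ f = Finsupp.linearCombination ℂ
      (fun d : Fin 2 →₀ ℕ => M ^ d 0 * D ^ d 1) (AddMonoidAlgebra.coeff f) := by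
  rw [Finsupp.linearCombination_apply, Finsupp.sum]
  rfl

lemma Φ_monomial (d : Fin 2 →₀ ℕ) (c : ℂ) :
    Φ (MvPolynomial.monomial d c) = c • (M ^ d 0 * D ^ d 1) := by
  rw [Φ_eq, ← MvPolynomial.single_eq_monomial]
  exact Finsupp.linearCombination_single _ _ _

lemma Φ_zero : Φ 0 = 0 := by rw [Φ_eq, AddMonoidAlgebra.coeff_zero, map_zero]

/-- Coordinates of `Φ f` with respect to the `T n` presentation. -/
noncomputable def ρ (n : ℕ) (f : MvPolynomial (Fin 2) ℂ) : Fin (n + 1) → Polynomial ℂ :=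
  fun k => ∑ d ∈ f.support.filter (fun d => d 1 = (k : ℕ)),
    f.coeff d • Polynomial.X ^ (d 0)

lemma Φ_eq_T {n : ℕ} (f : MvPolynomial (Fin 2) ℂ) (hdeg : degreeOf 1 f ≤ n) :
    Φ f = T n (ρ n f) := by
  classical
  have hsupp : ∀ d ∈ f.support, d 1 ≤ n :=
    fun d hd => (MvPolynomial.monomial_le_degreeOf 1 hd).trans hdeg
  have hT : T n (ρ n f) = ∑ k : Fin (n + 1),
      ∑ d ∈ f.support.filter (fun d => d 1 = (k : ℕ)),
        f.coeff d • (M ^ d 0 * D ^ (k : ℕ)) := by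
    have : T n (ρ n f) = ∑ k : Fin (n + 1), L (ρ n f k) * D ^ (k : ℕ) := rfl
    rw [this]
    refine Finset.sum_congr rfl fun k _ => ?_
    rw [ρ, map_sum, Finset.sum_mul]
    refine Finset.sum_congr rfl fun d _ => ?_
    rw [map_smul, map_pow, ← M_eq, smul_mul_assoc]
  rw [hT]
  have hg : ∀ k : Fin (n + 1),
      f.support.filter (fun d => d 1 = (k : ℕ))
        = f.support.filter (fun d => (⟨min (d 1) n, by omega⟩ : Fin (n + 1)) = k) := by
    intro k
    refine Finset.filter_congr fun d hd => ?_
    have h1 : d 1 ≤ n := hsupp d hd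
    have hk : (k : ℕ) ≤ n := Nat.le_of_lt_succ k.2
    constructor
    · intro h; apply Fin.ext; simp [h, Nat.min_eq_left hk]
    · intro h
      have := congrArg Fin.val h
      simpa [Nat.min_eq_left h1] using this
  have hstep : ∀ k : Fin (n + 1),
      (∑ d ∈ f.support.filter (fun d => d 1 = (k : ℕ)),
        f.coeff d • (M ^ d 0 * D ^ (k : ℕ)))
      = ∑ d ∈ f.support.filter
          (fun d => (⟨min (d 1) n, by omega⟩ : Fin (n + 1)) = k),
        f.coeff d • (M ^ d 0 * D ^ d 1) := by
    intro k
    rw [← hg k]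
    refine Finset.sum_congr rfl fun d hd => ?_
    have : d 1 = (k : ℕ) := (Finset.mem_filter.mp hd).2
    rw [this]
  rw [Finset.sum_congr rfl fun k _ => hstep k]
  rw [Finset.sum_fiberwise_of_maps_to (fun d _ => Finset.mem_univ _)]
  rfl


lemma fin2_finsupp_ext {d d' : Fin 2 →₀ ℕ} (h0 : d' 0 = d 0) (h1 : d' 1 = d 1) :
    d' = d := by
  refine Finsupp.ext fun x => ?_
  fin_cases x
  · exact h0
  · exact h1

lemma ρ_ne_zero {n : ℕ} {f : MvPolynomial (Fin 2) ℂ} (hdeg : degreeOf 1 f ≤ n)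
    (hf : f ≠ 0) : ρ n f ≠ 0 := by
  classical
  obtain ⟨d, hd⟩ := (MvPolynomial.support_nonempty.mpr hf)
  have hd1 : d 1 ≤ n := (MvPolynomial.monomial_le_degreeOf 1 hd).trans hdeg
  set k : Fin (n + 1) := ⟨d 1, by omega⟩ with hk
  have hcoeff : (ρ n f k).coeff (d 0) = f.coeff d := by
    have hmem : d ∈ f.support.filter (fun d' => d' 1 = (k : ℕ)) :=
      Finset.mem_filter.mpr ⟨hd, rfl⟩
    rw [ρ, Polynomial.finset_sum_coeff]
    rw [Finset.sum_eq_single_of_mem d hmem]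
    · simp [Polynomial.coeff_smul, Polynomial.coeff_X_pow]
    · intro d' hd' hne
      have h1 : d' 1 = d 1 := (Finset.mem_filter.mp hd').2
      rw [Polynomial.coeff_smul, Polynomial.coeff_X_pow]
      have : ¬ (d 0 = d' 0) := by
        intro h
        exact hne (fin2_finsupp_ext h.symm h1)
      simp [this]
  intro h
  have : (ρ n f k).coeff (d 0) = 0 := by rw [h]; simp
  rw [hcoeff] at this
  exact (MvPolynomial.mem_support_iff.mp hd) this

/-- Build a 2-variable polynomial out of `T`-coordinates. -/
noncomputable def toMv (n : ℕ) (p : Fin (n + 1) → Polynomial ℂ) :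
    MvPolynomial (Fin 2) ℂ :=
  ∑ k : Fin (n + 1), ∑ i ∈ (p k).support,
    MvPolynomial.monomial (Finsupp.single 0 i + Finsupp.single 1 (k : ℕ)) ((p k).coeff i)

lemma exps0 (i k : ℕ) : (Finsupp.single (0 : Fin 2) i + Finsupp.single (1 : Fin 2) k) 0 = i := by
  simp [Finsupp.single_apply]

lemma exps1 (i k : ℕ) : (Finsupp.single (0 : Fin 2) i + Finsupp.single (1 : Fin 2) k) 1 = k := by
  simp [Finsupp.single_apply]

lemma Φ_toMv (n : ℕ) (p : Fin (n + 1) → Polynomial ℂ) : Φ (toMv n p) = T n p := by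
  rw [toMv, Φ_eq, AddMonoidAlgebra.coeff_sum, map_sum]
  have : T n p = ∑ k : Fin (n + 1), L (p k) * D ^ (k : ℕ) := rfl
  rw [this]
  refine Finset.sum_congr rfl fun k _ => ?_
  rw [AddMonoidAlgebra.coeff_sum, map_sum]
  have hL : L (p k) = ∑ i ∈ (p k).support, (p k).coeff i • M ^ i := by
    conv_lhs => rw [Polynomial.as_sum_support (p k)]
    rw [map_sum]
    refine Finset.sum_congr rfl fun i _ => ?_
    rw [← Polynomial.smul_X_eq_monomial, map_smul, map_pow, ← M_eq]
  rw [hL, Finset.sum_mul]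
  refine Finset.sum_congr rfl fun i _ => ?_
  rw [← MvPolynomial.single_eq_monomial, AddMonoidAlgebra.coeff_single, Finsupp.linearCombination_single,
    exps0, exps1, smul_mul_assoc]

lemma toMv_ne_zero {n : ℕ} {p : Fin (n + 1) → Polynomial ℂ} (hp : p ≠ 0) :
    toMv n p ≠ 0 := by
  intro h
  have : T n p = 0 := by rw [← Φ_toMv, h, Φ_zero]
  exact hp (T_eq_zero this)

lemma degreeOf_toMv (n : ℕ) (p : Fin (n + 1) → Polynomial ℂ) :
    degreeOf 1 (toMv n p) ≤ n := by
  classical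
  rw [MvPolynomial.degreeOf_le_iff]
  intro m hm
  rw [toMv] at hm
  have := MvPolynomial.support_sum hm
  rw [Finset.mem_biUnion] at this
  obtain ⟨k, _, hk⟩ := this
  have := MvPolynomial.support_sum hk
  rw [Finset.mem_biUnion] at this
  obtain ⟨i, _, hi⟩ := this
  have hsub := MvPolynomial.support_monomial_subset hi
  rw [Finset.mem_singleton] at hsub
  rw [hsub, exps1]
  exact Nat.le_of_lt_succ k.2

lemma T_polySmul {n : ℕ} (s : Polynomial ℂ) (r : Fin (n + 1) → Polynomial ℂ) :
    T n (s • r) = L s * T n r := by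
  have h1 : T n (s • r) = ∑ k : Fin (n + 1), L (s * r k) * D ^ (k : ℕ) := rfl
  have h2 : T n r = ∑ k : Fin (n + 1), L (r k) * D ^ (k : ℕ) := rfl
  rw [h1, h2, Finset.mul_sum]
  exact Finset.sum_congr rfl fun k _ => by rw [map_mul, mul_assoc]

open Classical in
noncomputable def coords (N : ℕ) (E : Module.End ℂ (Polynomial ℂ)) :
    Fin (N + 1) → Polynomial ℂ :=
  if h : ∃ r, T N r = E then h.choose else 0

lemma T_coords {N : ℕ} {E : Module.End ℂ (Polynomial ℂ)} (h : ∃ r, T N r = E) :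
    T N (coords N E) = E := by
  rw [coords, dif_pos h]
  exact h.choose_spec

end HLC


open HLC

/-- Theorem 2.3, refined: comeasuring factors with degree bounds in y. -/
theorem heisenberg_left_comeasurable_degree_bounds
    (f g : MvPolynomial (Fin 2) ℂ) (hf : f ≠ 0) (hg : g ≠ 0) :
    ∃ a b : MvPolynomial (Fin 2) ℂ, a ≠ 0 ∧ b ≠ 0 ∧
      degreeOf (1 : Fin 2) a ≤ degreeOf (1 : Fin 2) g ∧
      degreeOf (1 : Fin 2) b ≤ degreeOf (1 : Fin 2) f ∧
      Φ a * Φ f = Φ b * Φ g := by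
  classical
  set m := degreeOf (1 : Fin 2) g with hm
  set n := degreeOf (1 : Fin 2) f with hn
  set N := m + n with hN
  set F := Φ f with hF
  set G := Φ g with hG
  have hFT : F = T n (ρ n f) := Φ_eq_T f hn.ge
  have hGT : G = T m (ρ m g) := Φ_eq_T g hm.ge
  have hFmem : F ∈ LinearMap.range (T n) := ⟨ρ n f, hFT.symm⟩
  have hGmem : G ∈ LinearMap.range (T m) := ⟨ρ m g, hGT.symm⟩
  have hmem : ∀ (p : Fin (m + 1) → Polynomial ℂ) (q : Fin (n + 1) → Polynomial ℂ),
      ∃ u, T N u = T m p * F - T n q * G := by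
    intro p q
    have h1 : T m p * F ∈ LinearMap.range (T N) := mul_mem ⟨p, rfl⟩ hFmem
    have h2 : T n q * G ∈ LinearMap.range (T N) :=
      range_mono (by omega) (mul_mem (m := n) (n := m) ⟨q, rfl⟩ hGmem)
    exact LinearMap.mem_range.mp (Submodule.sub_mem _ h1 h2)
  set Θf : (Fin (m + 1) → Polynomial ℂ) × (Fin (n + 1) → Polynomial ℂ) →
      (Fin (N + 1) → Polynomial ℂ) :=
    fun pq => coords N (T m pq.1 * F - T n pq.2 * G) with hΘf
  have hTΘ : ∀ pq, T N (Θf pq) = T m pq.1 * F - T n pq.2 * G :=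
    fun pq => T_coords (hmem _ _)
  set Θ : ((Fin (m + 1) → Polynomial ℂ) × (Fin (n + 1) → Polynomial ℂ))
      →ₗ[Polynomial ℂ] (Fin (N + 1) → Polynomial ℂ) :=
    { toFun := Θf
      map_add' := by
        intro x y
        apply T_injective N
        rw [map_add, hTΘ, hTΘ, hTΘ]
        show T m (x.1 + y.1) * F - T n (x.2 + y.2) * G = _
        rw [map_add, map_add, add_mul, add_mul]
        abel
      map_smul' := by
        intro s x
        apply T_injective N
        have e1 : T N (s • Θf x) = L s * T N (Θf x) := T_polySmul s _
        show T N (Θf (s • x)) = T N (s • Θf x)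
        rw [hTΘ, e1, hTΘ]
        show T m (s • x.1) * F - T n (s • x.2) * G = _
        rw [T_polySmul, T_polySmul, mul_sub, mul_assoc, mul_assoc] } with hΘ
  have hninj : ¬ Function.Injective Θ := by
    intro hinj
    have e : (Fin (m + 1 + (n + 1)) → Polynomial ℂ) ≃ₗ[Polynomial ℂ]
        ((Fin (m + 1) → Polynomial ℂ) × (Fin (n + 1) → Polynomial ℂ)) :=
      (LinearEquiv.funCongrLeft (Polynomial ℂ) (Polynomial ℂ) finSumFinEquiv).trans
        (LinearEquiv.sumArrowLequivProdArrow _ _ _ _)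
    have hcomp : Function.Injective (Θ.comp e.toLinearMap) := by
      exact hinj.comp e.injective
    have := le_of_fin_injective (Polynomial ℂ) (Θ.comp e.toLinearMap) hcomp
    omega
  have hker : ∃ x, Θ x = 0 ∧ x ≠ 0 := by
    by_contra hc
    apply hninj
    intro x y hxy
    by_contra hne
    exact hc ⟨x - y, by rw [map_sub, hxy, sub_self], sub_ne_zero.mpr hne⟩
  obtain ⟨⟨p, q⟩, hΘ0, hpq⟩ := hker
  have hkey : T m p * F = T n q * G := by
    have h1 : T N (Θf (p, q)) = T m p * F - T n q * G := hTΘ _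
    have h0 : Θf (p, q) = 0 := hΘ0
    rw [h0, map_zero] at h1
    exact (sub_eq_zero.mp h1.symm)
  have hp : p ≠ 0 := by
    intro hp0
    have hq : q ≠ 0 := by
      intro hq0
      exact hpq (by rw [hp0, hq0]; rfl)
    have hz : T n q * G = 0 := by rw [← hkey, hp0, map_zero, zero_mul]
    rw [hGT] at hz
    exact domain hq (ρ_ne_zero hm.ge hg) hz
  have hq : q ≠ 0 := by
    intro hq0
    have hz : T m p * F = 0 := by rw [hkey, hq0, map_zero, zero_mul]
    rw [hFT] at hz
    exact domain hp (ρ_ne_zero hn.ge hf) hz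
  refine ⟨toMv m p, toMv n q, toMv_ne_zero hp, toMv_ne_zero hq,
    degreeOf_toMv m p, degreeOf_toMv n q, ?_⟩
  rw [Φ_toMv, Φ_toMv]
  exact hkey
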